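/- Let (L, G) be a dynamic program satisfying assumptions A₁–A₅ and let T be its Bellman operator, (Tw)(x) = inf_{a ∈ G(x)} L(x, a, w). Then: (1) T has a unique fixed point w* in 𝓘 := { f : X → ℝ continuous, φ ≤ f ≤ ψ }; and (2) for each w ∈ 𝓘 there exist α ∈ [0, 1) and M < ∞ such that sup_{x ∈ X} |(Tⁿw)(x) − w*(x)| ≤ αⁿ·M for all n ∈ ℕ. -/

import Mathlib

open Set Filter

lemma berge_min_continuous {X A : Type*} [MetricSpace X] [MetricSpace A]
    (G : X → Set A)
    (hG_ne : ∀ x, (G x).Nonempty)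
    (hG_cpt : ∀ x, IsCompact (G x))
    (hG_uhc : ∀ x : X, ∀ U : Set A, IsOpen U → G x ⊆ U →
      ∀ᶠ x' in nhds x, G x' ⊆ U)
    (hG_lhc : ∀ x : X, ∀ U : Set A, IsOpen U → (G x ∩ U).Nonempty →
      ∀ᶠ x' in nhds x, (G x' ∩ U).Nonempty)
    (f : X → A → ℝ)
    (hf : ContinuousOn (fun p : X × A => f p.1 p.2) {p : X × A | p.2 ∈ G p.1}) :
    Continuous (fun x => sInf (f x '' G x)) := by
  set m : X → ℝ := fun x => sInf (f x '' G x) with hm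
  have hca : ∀ x, ContinuousOn (f x) (G x) := by
    intro x
    have : ContinuousOn (fun a : A => (fun p : X × A => f p.1 p.2) (x, a)) (G x) :=
      hf.comp ((continuous_const.prodMk continuous_id).continuousOn) (fun a ha => ha)
    exact this
  have hSc : ∀ x, IsCompact (f x '' G x) := fun x => (hG_cpt x).image_of_continuousOn (hca x)
  have hSne : ∀ x, (f x '' G x).Nonempty := fun x => (hG_ne x).image _
  have hbdd : ∀ x, BddBelow (f x '' G x) := fun x => (hSc x).bddBelow
  have hmem : ∀ x, m x ∈ f x '' G x := fun x => (hSc x).sInf_mem (hSne x)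
  rw [continuous_iff_continuousAt]
  intro x₀
  rw [ContinuousAt, Metric.tendsto_nhds]
  intro e he
  obtain ⟨a₀, ha₀G, ha₀⟩ := hmem x₀
  -- upper semicontinuity part
  have husc : ∀ᶠ x' in nhds x₀, m x' ≤ m x₀ + e / 2 := by
    have hcw : ContinuousWithinAt (fun p : X × A => f p.1 p.2)
        {p : X × A | p.2 ∈ G p.1} (x₀, a₀) := hf (x₀, a₀) ha₀G
    have h1 : {p : X × A | f p.1 p.2 < m x₀ + e / 2} ∈
        nhdsWithin (x₀, a₀) {p : X × A | p.2 ∈ G p.1} := by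
      have hlt : f x₀ a₀ < m x₀ + e / 2 := by rw [ha₀]; linarith
      exact hcw (Iio_mem_nhds hlt)
    rw [mem_nhdsWithin] at h1
    obtain ⟨O, hOopen, hOmem, hOsub⟩ := h1
    obtain ⟨u, v, hu, hv, hx₀u, ha₀v, huv⟩ := isOpen_prod_iff.1 hOopen x₀ a₀ hOmem
    have ev1 := hG_lhc x₀ v hv ⟨a₀, ha₀G, ha₀v⟩
    have ev2 : ∀ᶠ x' in nhds x₀, x' ∈ u := hu.mem_nhds hx₀u
    filter_upwards [ev1, ev2] with x' h1' h2'
    obtain ⟨a', ha'G, ha'v⟩ := h1'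
    have : (x', a') ∈ O := huv ⟨h2', ha'v⟩
    have hfb : f x' a' < m x₀ + e / 2 := hOsub ⟨this, ha'G⟩
    have : m x' ≤ f x' a' := csInf_le (hbdd x') ⟨a', ha'G, rfl⟩
    linarith
  -- lower semicontinuity part
  have hlsc : ∀ᶠ x' in nhds x₀, m x₀ - e / 2 ≤ m x' := by
    have H : ∀ a : G x₀, ∃ (u : Set X) (v : Set A), IsOpen u ∧ IsOpen v ∧ x₀ ∈ u ∧
        (a : A) ∈ v ∧ ∀ x' ∈ u, ∀ a' ∈ v, a' ∈ G x' → m x₀ - e / 2 < f x' a' := by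
      rintro ⟨a, haG⟩
      have hcw : ContinuousWithinAt (fun p : X × A => f p.1 p.2)
          {p : X × A | p.2 ∈ G p.1} (x₀, a) := hf (x₀, a) haG
      have h1 : {p : X × A | m x₀ - e / 2 < f p.1 p.2} ∈
          nhdsWithin (x₀, a) {p : X × A | p.2 ∈ G p.1} := by
        have hle : m x₀ ≤ f x₀ a := csInf_le (hbdd x₀) ⟨a, haG, rfl⟩
        exact hcw (Ioi_mem_nhds (by linarith))
      rw [mem_nhdsWithin] at h1
      obtain ⟨O, hOopen, hOmem, hOsub⟩ := h1
      obtain ⟨u, v, hu, hv, hx₀u, hav, huv⟩ := isOpen_prod_iff.1 hOopen x₀ a hOmem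
      refine ⟨u, v, hu, hv, hx₀u, hav, fun x' hx' a' ha' ha'G => ?_⟩
      have : (x', a') ∈ {p : X × A | m x₀ - e / 2 < f p.1 p.2} := hOsub ⟨huv ⟨hx', ha'⟩, ha'G⟩
      exact this
    choose u v hu hv hxu hav hprop using H
    have hcov : G x₀ ⊆ ⋃ a : G x₀, v a := by
      intro b hb
      exact mem_iUnion.2 ⟨⟨b, hb⟩, hav ⟨b, hb⟩⟩
    obtain ⟨t, ht⟩ := (hG_cpt x₀).elim_finite_subcover v hv hcov
    have hUopen : IsOpen (⋃ i ∈ t, v i) := isOpen_biUnion (fun i _ => hv i)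
    have ev3 := hG_uhc x₀ (⋃ i ∈ t, v i) hUopen ht
    have ev4 : ∀ᶠ x' in nhds x₀, ∀ i ∈ t, x' ∈ u i := by
      rw [eventually_all_finset]
      exact fun i _ => (hu i).mem_nhds (hxu i)
    filter_upwards [ev3, ev4] with x' h3' h4'
    apply le_csInf (hSne x')
    rintro y ⟨a', ha'G, rfl⟩
    obtain ⟨i, hi, ha'v⟩ := mem_iUnion₂.1 (h3' ha'G)
    exact le_of_lt (hprop i x' (h4' i hi) a' ha'v ha'G)
  filter_upwards [husc, hlsc] with x' h1' h2'
  rw [Real.dist_eq, abs_sub_lt_iff]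
  constructor <;> linarith

/-- for a dynamic program `(L, G)` satisfying assumptions A₁–A₅, the
Bellman operator `T` has a unique fixed point `w*` in
`𝓘 = { f : X → ℝ continuous, φ ≤ f ≤ ψ }`, and for each `w ∈ 𝓘` there exist `α ∈ [0,1)`
and `M < ∞` with `‖Tⁿw − w*‖_∞ ≤ αⁿ M` for all `n`. -/
theorem general_bellman_unique_fixed_point
    {X A : Type*} [MetricSpace X] [CompactSpace X] [MetricSpace A]
    (G : X → Set A)
    (hG_ne : ∀ x, (G x).Nonempty)
    (hG_cpt : ∀ x, IsCompact (G x))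
    (hG_uhc : ∀ x : X, ∀ U : Set A, IsOpen U → G x ⊆ U →
      ∀ᶠ x' in nhds x, G x' ⊆ U)
    (hG_lhc : ∀ x : X, ∀ U : Set A, IsOpen U → (G x ∩ U).Nonempty →
      ∀ᶠ x' in nhds x, (G x' ∩ U).Nonempty)
    (L : X → A → (X → ℝ) → ℝ)
    (T : (X → ℝ) → (X → ℝ))
    (hT : ∀ (w : X → ℝ) (x : X), T w x = sInf ((fun a => L x a w) '' G x))
    -- A₁: continuity of the aggregator in (x, a)
    (hA1 : ∀ w : X → ℝ, Continuous w →
      ContinuousOn (fun p : X × A => L p.1 p.2 w) {p : X × A | p.2 ∈ G p.1})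
    -- A₂: monotonicity of the aggregator in the continuation value
    (hA2 : ∀ u v : X → ℝ, Continuous u → Continuous v → (∀ x, u x ≤ v x) →
      ∀ x : X, ∀ a ∈ G x, L x a u ≤ L x a v)
    -- A₃: concavity of the aggregator in the continuation value
    (hA3 : ∀ lam : ℝ, lam ∈ Set.Ioo (0 : ℝ) 1 →
      ∀ u v : X → ℝ, Continuous u → Continuous v →
      ∀ x : X, ∀ a ∈ G x,
        lam * L x a u + (1 - lam) * L x a v ≤
          L x a (fun y => lam * u y + (1 - lam) * v y))
    -- A₄ and A₅: upper and lower bound functions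
    (φ ψ : X → ℝ) (hφ : Continuous φ) (hψ : Continuous ψ)
    (hφψ : ∀ x, φ x ≤ ψ x)
    (hA4 : ∀ x, T ψ x ≤ ψ x)
    (ε : ℝ) (hε : 0 < ε)
    (hA5 : ∀ x, φ x + ε * (ψ x - φ x) ≤ T φ x) :
    ∃ wstar : X → ℝ,
      (Continuous wstar ∧ ∀ x, φ x ≤ wstar x ∧ wstar x ≤ ψ x) ∧
      T wstar = wstar ∧
      (∀ w : X → ℝ, Continuous w → (∀ x, φ x ≤ w x ∧ w x ≤ ψ x) →
        T w = w → w = wstar) ∧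
      (∀ w : X → ℝ, Continuous w → (∀ x, φ x ≤ w x ∧ w x ≤ ψ x) →
        ∃ α M : ℝ, 0 ≤ α ∧ α < 1 ∧ 0 ≤ M ∧
          ∀ (n : ℕ) (x : X), |T^[n] w x - wstar x| ≤ α ^ n * M) := by

  classical
  by_cases hXne : Nonempty X
  case neg =>
    refine ⟨ψ, ⟨hψ, fun x => (hXne ⟨x⟩).elim⟩, funext fun x => (hXne ⟨x⟩).elim,
      fun w _ _ _ => funext fun x => (hXne ⟨x⟩).elim,
      fun w _ _ => ⟨1/2, 0, by norm_num, by norm_num, le_refl 0,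
        fun n x => (hXne ⟨x⟩).elim⟩⟩
  case pos =>
  haveI := hXne
  -- shrink ε so it stays in (0, 1/2]
  set ε' : ℝ := min ε (1/2) with hε'def
  have hε'0 : 0 < ε' := lt_min hε (by norm_num)
  have hε'half : ε' ≤ 1/2 := min_le_right _ _
  have hβ0 : (0:ℝ) < 1 - ε' := by linarith
  have hβ1 : (1:ℝ) - ε' < 1 := by linarith
  have hpow_pos : ∀ n : ℕ, 0 < (1 - ε')^n := fun n => pow_pos hβ0 n
  have hpow_le1 : ∀ n : ℕ, (1 - ε')^n ≤ 1 := fun n => pow_le_one₀ hβ0.le hβ1.le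
  -- basic facts about T
  have hcomp : ∀ (w : X → ℝ), Continuous w → ∀ x, ContinuousOn (fun a => L x a w) (G x) := by
    intro w hw x
    exact (hA1 w hw).comp ((continuous_const.prodMk continuous_id).continuousOn)
      (fun a ha => ha)
  have himg : ∀ (w : X → ℝ), Continuous w → ∀ x, IsCompact ((fun a => L x a w) '' G x) :=
    fun w hw x => (hG_cpt x).image_of_continuousOn (hcomp w hw x)
  have hbdd : ∀ (w : X → ℝ), Continuous w → ∀ x, BddBelow ((fun a => L x a w) '' G x) :=
    fun w hw x => (himg w hw x).bddBelow
  have hTle : ∀ (w : X → ℝ), Continuous w → ∀ x, ∀ a ∈ G x, T w x ≤ L x a w := by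
    intro w hw x a ha
    rw [hT]
    exact csInf_le (hbdd w hw x) ⟨a, ha, rfl⟩
  have hTatt : ∀ (w : X → ℝ), Continuous w → ∀ x, ∃ a ∈ G x, T w x = L x a w := by
    intro w hw x
    have := (himg w hw x).sInf_mem ((hG_ne x).image _)
    rw [hT]
    obtain ⟨a, ha, h⟩ := this
    exact ⟨a, ha, h.symm⟩
  have hmono : ∀ u v : X → ℝ, Continuous u → Continuous v → (∀ x, u x ≤ v x) →
      ∀ x, T u x ≤ T v x := by
    intro u v hu hv huv x
    obtain ⟨a, ha, hval⟩ := hTatt v hv x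
    calc T u x ≤ L x a u := hTle u hu x a ha
      _ ≤ L x a v := hA2 u v hu hv huv x a ha
      _ = T v x := hval.symm
  have hTcont : ∀ w : X → ℝ, Continuous w → Continuous (T w) := by
    intro w hw
    have h := berge_min_continuous G hG_ne hG_cpt hG_uhc hG_lhc (fun x a => L x a w)
      (hA1 w hw)
    have heq : T w = fun x => sInf ((fun a => L x a w) '' G x) := funext (hT w)
    rw [heq]
    exact h
  have hA5' : ∀ x, φ x + ε' * (ψ x - φ x) ≤ T φ x := by
    intro x
    have h3 : ε' * (ψ x - φ x) ≤ ε * (ψ x - φ x) :=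
      mul_le_mul_of_nonneg_right (min_le_left _ _) (by linarith [hφψ x])
    linarith [hA5 x]
  have hφTφ : ∀ x, φ x ≤ T φ x := by
    intro x
    have : 0 ≤ ε' * (ψ x - φ x) := mul_nonneg hε'0.le (by linarith [hφψ x])
    linarith [hA5' x]
  have hψb : ∀ x, φ x ≤ ψ x ∧ ψ x ≤ ψ x := fun x => ⟨hφψ x, le_refl _⟩
  have hφb : ∀ x, φ x ≤ φ x ∧ φ x ≤ ψ x := fun x => ⟨le_refl _, hφψ x⟩
  have hinv : ∀ w : X → ℝ, Continuous w → (∀ x, φ x ≤ w x ∧ w x ≤ ψ x) →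
      ∀ x, φ x ≤ T w x ∧ T w x ≤ ψ x := by
    intro w hw hwb x
    constructor
    · exact le_trans (hφTφ x) (hmono φ w hφ hw (fun y => (hwb y).1) x)
    · exact le_trans (hmono w ψ hw hψ (fun y => (hwb y).2) x) (hA4 x)
  -- the one-step concavity estimate
  have hstep : ∀ lam : ℝ, 0 ≤ lam → lam < 1 →
      ∀ u v : X → ℝ, Continuous u → Continuous v →
      (∀ x, φ x ≤ u x ∧ u x ≤ ψ x) → (∀ x, φ x ≤ v x ∧ v x ≤ ψ x) →
      (∀ x, lam * v x + (1 - lam) * φ x ≤ u x) →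
      ∀ x, (1 - (1 - lam) * (1 - ε')) * T v x + (1 - lam) * (1 - ε') * φ x ≤ T u x := by
    intro lam hlam0 hlam1 u v hu hv hub hvb hlow x
    have hTvψ : T v x ≤ ψ x := le_trans (hmono v ψ hv hψ (fun y => (hvb y).2) x) (hA4 x)
    rcases eq_or_lt_of_le hlam0 with h0 | h0
    · -- lam = 0
      have hφu : ∀ y, φ y ≤ u y := by
        intro y
        have := hlow y
        rw [← h0] at this
        linarith
      have h1 : T φ x ≤ T u x := hmono φ u hφ hu hφu x
      have h2 := hA5' x
      rw [← h0]
      have h3 : ε' * T v x ≤ ε' * ψ x := mul_le_mul_of_nonneg_left hTvψ hε'0.le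
      nlinarith
    · -- 0 < lam
      set mfun : X → ℝ := fun y => lam * v y + (1 - lam) * φ y with hmf
      have hmc : Continuous mfun := (continuous_const.mul hv).add (continuous_const.mul hφ)
      have h1 : T mfun x ≤ T u x := hmono mfun u hmc hu hlow x
      obtain ⟨a, ha, hval⟩ := hTatt mfun hmc x
      have h2 := hA3 lam ⟨h0, hlam1⟩ v φ hv hφ x a ha
      have h3 : T v x ≤ L x a v := hTle v hv x a ha
      have h4 : T φ x ≤ L x a φ := hTle φ hφ x a ha
      have h5 : lam * T v x + (1 - lam) * T φ x ≤ T mfun x := by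
        rw [hval]
        have e1 : lam * T v x ≤ lam * L x a v := mul_le_mul_of_nonneg_left h3 hlam0
        have e2 : (1 - lam) * T φ x ≤ (1 - lam) * L x a φ :=
          mul_le_mul_of_nonneg_left h4 (by linarith)
        calc lam * T v x + (1 - lam) * T φ x ≤
            lam * L x a v + (1 - lam) * L x a φ := by linarith
          _ ≤ L x a mfun := h2
      have h6 := hA5' x
      have hint1 : (1 - lam) * ε' * T v x ≤ (1 - lam) * ε' * ψ x :=
        mul_le_mul_of_nonneg_left hTvψ (mul_nonneg (by linarith) hε'0.le)
      have hint2 : (1 - lam) * (φ x + ε' * (ψ x - φ x)) ≤ (1 - lam) * T φ x :=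
        mul_le_mul_of_nonneg_left h6 (by linarith)
      nlinarith [hint1, hint2, h5, h1]
  -- package: iterates are continuous and stay in the interval
  have hiter : ∀ u : X → ℝ, Continuous u → (∀ x, φ x ≤ u x ∧ u x ≤ ψ x) →
      ∀ n : ℕ, Continuous (T^[n] u) ∧ (∀ x, φ x ≤ T^[n] u x ∧ T^[n] u x ≤ ψ x) := by
    intro u hu hub n
    induction n with
    | zero => exact ⟨hu, hub⟩
    | succ n ih =>
      rw [Function.iterate_succ_apply']
      exact ⟨hTcont _ ih.1, hinv _ ih.1 ih.2⟩
  -- the n-step estimate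
  have hkey : ∀ u v : X → ℝ, Continuous u → (∀ x, φ x ≤ u x ∧ u x ≤ ψ x) →
      Continuous v → (∀ x, φ x ≤ v x ∧ v x ≤ ψ x) → ∀ n : ℕ, ∀ x,
      (1 - (1 - ε')^n) * T^[n] v x + (1 - ε')^n * φ x ≤ T^[n] u x := by
    intro u v hu hub hv hvb n
    induction n with
    | zero =>
      intro x
      simpa using (hub x).1
    | succ n ih =>
      intro x
      have hlam0 : (0:ℝ) ≤ 1 - (1 - ε')^n := by linarith [hpow_le1 n]
      have hlam1 : 1 - (1 - ε')^n < 1 := by linarith [hpow_pos n]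
      have h1 := hstep (1 - (1 - ε')^n) hlam0 hlam1 (T^[n] u) (T^[n] v)
        (hiter u hu hub n).1 (hiter v hv hvb n).1 (hiter u hu hub n).2
        (hiter v hv hvb n).2 (fun y => by have := ih y; linarith) x
      rw [Function.iterate_succ_apply', Function.iterate_succ_apply']
      have hps : (1 - ε')^(n+1) = (1 - ε')^n * (1 - ε') := pow_succ _ _
      rw [hps]
      linarith [h1]
  have hest : ∀ u v : X → ℝ, Continuous u → (∀ x, φ x ≤ u x ∧ u x ≤ ψ x) →
      Continuous v → (∀ x, φ x ≤ v x ∧ v x ≤ ψ x) → ∀ n : ℕ, ∀ x,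
      |T^[n] u x - T^[n] v x| ≤ (1 - ε')^n * (ψ x - φ x) := by
    intro u v hu hub hv hvb n x
    have h1 := hkey u v hu hub hv hvb n x
    have h2 := hkey v u hv hvb hu hub n x
    have h3 := (hiter u hu hub n).2 x
    have h4 := (hiter v hv hvb n).2 x
    have e1 : (1 - ε')^n * T^[n] v x ≤ (1 - ε')^n * ψ x :=
      mul_le_mul_of_nonneg_left h4.2 (hpow_pos n).le
    have e2 : (1 - ε')^n * T^[n] u x ≤ (1 - ε')^n * ψ x :=
      mul_le_mul_of_nonneg_left h3.2 (hpow_pos n).le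
    rw [abs_sub_le_iff]
    constructor <;> nlinarith
  -- the maximum of ψ - φ
  obtain ⟨z, -, hz⟩ := isCompact_univ.exists_isMaxOn univ_nonempty
    ((hψ.sub hφ).continuousOn (s := univ))
  set C : ℝ := ψ z - φ z with hCdef
  have hC0 : 0 ≤ C := by have := hφψ z; linarith
  have hCb : ∀ x, ψ x - φ x ≤ C := fun x => hz (mem_univ x)
  -- iterated monotonicityumps
  have hitmono : ∀ u v : X → ℝ, Continuous u → (∀ x, φ x ≤ u x ∧ u x ≤ ψ x) →
      Continuous v → (∀ x, φ x ≤ v x ∧ v x ≤ ψ x) → (∀ x, u x ≤ v x) →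
      ∀ n : ℕ, ∀ x, T^[n] u x ≤ T^[n] v x := by
    intro u v hu hub hv hvb huv n
    induction n with
    | zero => exact huv
    | succ n ih =>
      intro x
      rw [Function.iterate_succ_apply', Function.iterate_succ_apply']
      exact hmono _ _ (hiter u hu hub n).1 (hiter v hv hvb n).1 ih x
  have hTψb := hinv ψ hψ hψb
  have hTψc := hTcont ψ hψ
  have hTφb := hinv φ hφ hφb
  have hTφc := hTcont φ hφ
  have hanti : ∀ x, Antitone (fun n => T^[n] ψ x) := by
    intro x
    apply antitone_nat_of_succ_le
    intro n
    have h := hitmono (T ψ) ψ hTψc hTψb hψ hψb hA4 n x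
    rw [← Function.iterate_succ_apply] at h
    exact h
  have hmonoφ : ∀ x, Monotone (fun n => T^[n] φ x) := by
    intro x
    apply monotone_nat_of_le_succ
    intro n
    have h := hitmono φ (T φ) hφ hφb hTφc hTφb hφTφ n x
    rw [← Function.iterate_succ_apply] at h
    exact h
  -- definition of wstar
  set wstar : X → ℝ := fun x => ⨅ n : ℕ, T^[n] ψ x with hwdef
  have hwbddb : ∀ x, BddBelow (range fun n : ℕ => T^[n] ψ x) := by
    intro x
    refine ⟨φ x, ?_⟩
    rintro y ⟨n, rfl⟩
    exact ((hiter ψ hψ hψb n).2 x).1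
  have hwle : ∀ (n : ℕ) x, wstar x ≤ T^[n] ψ x := fun n x => ciInf_le (hwbddb x) n
  have hwge : ∀ (n : ℕ) x, T^[n] φ x ≤ wstar x := by
    intro n x
    apply le_ciInf
    intro k
    rcases le_total k n with h | h
    · calc T^[n] φ x ≤ T^[n] ψ x := hitmono φ ψ hφ hφb hψ hψb hφψ n x
        _ ≤ T^[k] ψ x := hanti x h
    · calc T^[n] φ x ≤ T^[k] φ x := hmonoφ x h
        _ ≤ T^[k] ψ x := hitmono φ ψ hφ hφb hψ hψb hφψ k x
  have hgap : ∀ (n : ℕ) x, T^[n] ψ x - T^[n] φ x ≤ (1 - ε')^n * C := by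
    intro n x
    have h := hest φ ψ hφ hφb hψ hψb n x
    have h2 : (1 - ε')^n * (ψ x - φ x) ≤ (1 - ε')^n * C :=
      mul_le_mul_of_nonneg_left (hCb x) (hpow_pos n).le
    have h3 : T^[n] ψ x - T^[n] φ x ≤ |T^[n] φ x - T^[n] ψ x| := by
      rw [abs_sub_comm]
      exact le_abs_self _
    linarith
  have hwdist : ∀ (n : ℕ) x, |T^[n] ψ x - wstar x| ≤ (1 - ε')^n * C := by
    intro n x
    have h1 := hwle n x
    have h2 := hwge n x
    have h3 := hgap n x
    rw [abs_le]
    constructor <;> linarith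
  have hlim0 : Tendsto (fun n : ℕ => (1 - ε')^n * C) atTop (nhds 0) := by
    have h := tendsto_pow_atTop_nhds_zero_of_lt_one hβ0.le hβ1
    simpa using h.mul_const C
  have htu : TendstoUniformly (fun (n : ℕ) x => T^[n] ψ x) wstar atTop := by
    rw [Metric.tendstoUniformly_iff]
    intro e he
    filter_upwards [hlim0.eventually (Iio_mem_nhds he)] with n hn x
    rw [Real.dist_eq, abs_sub_comm]
    exact lt_of_le_of_lt (hwdist n x) hn
  have hwcont : Continuous wstar :=
    htu.continuous (Eventually.of_forall fun n => (hiter ψ hψ hψb n).1).frequently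
  have hwb : ∀ x, φ x ≤ wstar x ∧ wstar x ≤ ψ x := by
    intro x
    constructor
    · have := hwge 0 x; simpa using this
    · have := hwle 0 x; simpa using this
  -- fixed point
  have hfix : T wstar = wstar := by
    funext x
    have hbound : ∀ n : ℕ, |T wstar x - wstar x| ≤ (1 - ε')^(n+1) * C := by
      intro n
      have hu1 : T wstar x ≤ T^[n+1] ψ x := by
        rw [Function.iterate_succ_apply']
        exact hmono wstar (T^[n] ψ) hwcont (hiter ψ hψ hψb n).1 (hwle n) x
      have hl1 : T^[n+1] φ x ≤ T wstar x := by
        rw [Function.iterate_succ_apply']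
        exact hmono (T^[n] φ) wstar (hiter φ hφ hφb n).1 hwcont (hwge n) x
      have h2 := hwle (n+1) x
      have h3 := hwge (n+1) x
      have h4 := hgap (n+1) x
      rw [abs_le]
      constructor <;> linarith
    have hlim1 : Tendsto (fun n : ℕ => (1 - ε')^(n+1) * C) atTop (nhds 0) := by
      have := hlim0.comp (tendsto_add_atTop_nat 1)
      simpa [Function.comp_def] using this
    have := ge_of_tendsto hlim1 (Eventually.of_forall hbound)
    have habs : |T wstar x - wstar x| = 0 := le_antisymm this (abs_nonneg _)
    have := abs_eq_zero.1 habs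
    linarith [sub_eq_zero.1 this, this]
  refine ⟨wstar, ⟨hwcont, hwb⟩, hfix, ?_, ?_⟩
  · -- uniqueness
    intro w hw hwb' hfixw
    funext x
    have hwit : ∀ n : ℕ, T^[n] w = w := fun n => Function.iterate_fixed hfixw n
    have hbound : ∀ n : ℕ, |w x - wstar x| ≤ (1 - ε')^n * C + (1 - ε')^n * C := by
      intro n
      have h1 := hest w ψ hw hwb' hψ hψb n x
      rw [hwit n] at h1
      have h2 := hwdist n x
      have h3 : (1 - ε')^n * (ψ x - φ x) ≤ (1 - ε')^n * C :=
        mul_le_mul_of_nonneg_left (hCb x) (hpow_pos n).le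
      calc |w x - wstar x| ≤ |w x - T^[n] ψ x| + |T^[n] ψ x - wstar x| :=
          abs_sub_le _ _ _
        _ ≤ (1 - ε')^n * C + (1 - ε')^n * C := by linarith
    have hlim2 : Tendsto (fun n : ℕ => (1 - ε')^n * C + (1 - ε')^n * C) atTop (nhds 0) := by
      have := hlim0.add hlim0
      simpa using this
    have := ge_of_tendsto hlim2 (Eventually.of_forall hbound)
    have habs : |w x - wstar x| = 0 := le_antisymm this (abs_nonneg _)
    have := abs_eq_zero.1 habs
    linarith [sub_eq_zero.1 this]
  · -- geometric convergence
    intro w hw hwb'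
    refine ⟨1 - ε', 2 * C, by linarith, by linarith, by linarith, ?_⟩
    intro n x
    have h1 := hest w ψ hw hwb' hψ hψb n x
    have h2 := hwdist n x
    have h3 : (1 - ε')^n * (ψ x - φ x) ≤ (1 - ε')^n * C :=
      mul_le_mul_of_nonneg_left (hCb x) (hpow_pos n).le
    calc |T^[n] w x - wstar x| ≤ |T^[n] w x - T^[n] ψ x| + |T^[n] ψ x - wstar x| :=
        abs_sub_le _ _ _
      _ ≤ (1 - ε')^n * (2 * C) := by nlinarith
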